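/- Let T_j : X ⇉ X be union α_j-averaged nonexpansive for j = 1,...,m. Then the composition T_m ∘ ... ∘ T_1 (with set-valued composition) is union α-averaged nonexpansive with α := (1 + (Σ_j α_j/(1−α_j))^{−1})^{−1}. -/

import Mathlib

set_option linter.unusedSectionVars false


open Filter Topology

/-- Outer semicontinuity of an index-valued map `φ : X ⇉ I` (finite discrete `I`). -/
def OSCIdx {X I : Type*} [TopologicalSpace X] (φ : X → Set I) : Prop :=
  ∀ (x : X) (i : I) (xn : ℕ → X),
    Tendsto xn atTop (nhds x) → (∀ n, i ∈ φ (xn n)) → i ∈ φ x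

/-- A single-valued operator `S : X → X` is `α`-averaged nonexpansive (`α ∈ (0,1)`). -/
def Averaged {X : Type*} [NormedAddCommGroup X] [InnerProductSpace ℝ X]
    (α : ℝ) (S : X → X) : Prop :=
  0 < α ∧ α < 1 ∧
    ∀ x y : X, ‖S x - S y‖ ^ 2 + (1 - α) / α * ‖(x - S x) - (y - S y)‖ ^ 2 ≤ ‖x - y‖ ^ 2

/-- A set-valued operator `T : X ⇉ X` is union `α`-averaged nonexpansive if
`T(x) = {T_i(x) : i ∈ φ(x)}` for a finite index set `I`, a collection of
`α`-averaged nonexpansive operators `{T_i}` and an osc nonempty-valued selector `φ`. -/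
def UnionAveraged {X : Type*} [NormedAddCommGroup X] [InnerProductSpace ℝ X]
    (α : ℝ) (T : X → Set X) : Prop :=
  ∃ (I : Type) (_ : Fintype I) (Ts : I → X → X) (φ : X → Set I),
    (∀ i, Averaged α (Ts i)) ∧ OSCIdx φ ∧ (∀ x, (φ x).Nonempty) ∧
    ∀ x, T x = {y | ∃ i ∈ φ x, y = Ts i x}

/-- Set-valued composition `T_m ∘ ⋯ ∘ T_1` (apply `T 0` first, then the rest):
`(S ∘ T)(x) = ⋃_{y ∈ T(x)} S(y)`. -/
def compSV {X : Type*} : ∀ {m : ℕ}, (Fin m → (X → Set X)) → X → Set X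
  | 0, _, x => {x}
  | _ + 1, T, x => ⋃ y ∈ T 0 x, compSV (fun i => T i.succ) y


section Aux
variable {X : Type*} [NormedAddCommGroup X] [InnerProductSpace ℝ X]

/-- Reparametrized averagedness: `s = α/(1-α)`. -/
def AvgS (s : ℝ) (S : X → X) : Prop :=
  0 < s ∧ ∀ x y : X, ‖S x - S y‖ ^ 2 + s⁻¹ * ‖(x - S x) - (y - S y)‖ ^ 2 ≤ ‖x - y‖ ^ 2

lemma weight_ineq (a b U V C : ℝ) (ha : 0 < a) (hb : 0 < b)
    (h : 2 * (a * b) * C ≤ a ^ 2 * U + b ^ 2 * V) :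
    (a + b)⁻¹ * (U + 2 * C + V) ≤ b⁻¹ * U + a⁻¹ * V := by
  rw [inv_mul_le_iff₀ (by linarith)]
  have h1 : b⁻¹ * U = U / b := by ring
  have h2 : a⁻¹ * V = V / a := by ring
  rw [h1, h2, div_add_div _ _ (ne_of_gt hb) (ne_of_gt ha)]
  rw [mul_comm (a+b), div_mul_eq_mul_div, le_div_iff₀ (by positivity)]
  nlinarith [mul_pos ha hb]

lemma avgS_comp {a b : ℝ} {S T : X → X} (hS : AvgS a S) (hT : AvgS b T) :
    AvgS (a + b) (fun x => S (T x)) := by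
  obtain ⟨ha, hSin⟩ := hS
  obtain ⟨hb, hTin⟩ := hT
  refine ⟨by linarith, fun x y => ?_⟩
  set u : X := (x - T x) - (y - T y) with hu
  set v : X := (T x - S (T x)) - (T y - S (T y)) with hv
  have hsum : (x - S (T x)) - (y - S (T y)) = u + v := by rw [hu, hv]; abel
  have hT' := hTin x y
  have hS' := hSin (T x) (T y)
  have hkey : 2 * (a * b) * (inner ℝ u v : ℝ) ≤ a ^ 2 * ‖u‖ ^ 2 + b ^ 2 * ‖v‖ ^ 2 := by
    have h0 : (0 : ℝ) ≤ ‖a • u - b • v‖ ^ 2 := by positivity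
    rw [norm_sub_sq_real, norm_smul, norm_smul, real_inner_smul_left, real_inner_smul_right] at h0
    rw [Real.norm_eq_abs, Real.norm_eq_abs, abs_of_pos ha, abs_of_pos hb] at h0
    nlinarith
  have hw := weight_ineq a b (‖u‖ ^ 2) (‖v‖ ^ 2) (inner ℝ u v) ha hb hkey
  have hnorm : ‖u + v‖ ^ 2 = ‖u‖ ^ 2 + 2 * (inner ℝ u v : ℝ) + ‖v‖ ^ 2 :=
    norm_add_sq_real u v
  calc ‖S (T x) - S (T y)‖ ^ 2 + (a + b)⁻¹ * ‖(x - S (T x)) - (y - S (T y))‖ ^ 2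
      = ‖S (T x) - S (T y)‖ ^ 2 + (a + b)⁻¹ * (‖u‖ ^ 2 + 2 * (inner ℝ u v : ℝ) + ‖v‖ ^ 2) := by
        rw [hsum, hnorm]
    _ ≤ ‖S (T x) - S (T y)‖ ^ 2 + (b⁻¹ * ‖u‖ ^ 2 + a⁻¹ * ‖v‖ ^ 2) := by linarith
    _ ≤ ‖x - y‖ ^ 2 := by linarith

lemma AvgS.continuous {s : ℝ} {S : X → X} (h : AvgS s S) : Continuous S := by
  obtain ⟨hs, hin⟩ := h
  have hne : ∀ x y : X, ‖S x - S y‖ ≤ ‖x - y‖ := by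
    intro x y
    have h1 := hin x y
    have h2 : (0:ℝ) ≤ s⁻¹ * ‖(x - S x) - (y - S y)‖ ^ 2 := by positivity
    have h3 : ‖S x - S y‖ ^ 2 ≤ ‖x - y‖ ^ 2 := by linarith
    have := Real.sqrt_le_sqrt h3
    rwa [Real.sqrt_sq (norm_nonneg _), Real.sqrt_sq (norm_nonneg _)] at this
  exact (LipschitzWith.of_dist_le_mul (K := 1) (fun x y => by
    rw [dist_eq_norm, dist_eq_norm]; simpa using hne x y)).continuous

end Aux

section Aux2
variable {X : Type*} [NormedAddCommGroup X] [InnerProductSpace ℝ X]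

/-- Reparametrized union-averagedness. -/
def UAvgS (s : ℝ) (T : X → Set X) : Prop :=
  ∃ (I : Type) (_ : Fintype I) (Ts : I → X → X) (φ : X → Set I),
    (∀ i, AvgS s (Ts i)) ∧ OSCIdx φ ∧ (∀ x, (φ x).Nonempty) ∧
    ∀ x, T x = {y | ∃ i ∈ φ x, y = Ts i x}

lemma uAvgS_comp {a b : ℝ} {S T : X → Set X} (hS : UAvgS a S) (hT : UAvgS b T) :
    UAvgS (a + b) (fun x => ⋃ y ∈ T x, S y) := by
  obtain ⟨I, instI, SS, φS, hSav, hSosc, hSne, hSset⟩ := hS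
  obtain ⟨J, instJ, TT, φT, hTav, hTosc, hTne, hTset⟩ := hT
  refine ⟨I × J, inferInstance, fun p x => SS p.1 (TT p.2 x),
    fun x => {p : I × J | p.2 ∈ φT x ∧ p.1 ∈ φS (TT p.2 x)}, ?_, ?_, ?_, ?_⟩
  · intro p
    simpa [add_comm] using avgS_comp (hSav p.1) (hTav p.2)
  · rintro x ⟨i, j⟩ xn hxn hmem
    have hj : j ∈ φT x := hTosc x j xn hxn (fun n => (hmem n).1)
    have hcont : Continuous (TT j) := (hTav j).continuous
    have htend : Tendsto (fun n => TT j (xn n)) atTop (nhds (TT j x)) :=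
      (hcont.tendsto x).comp hxn
    have hi : i ∈ φS (TT j x) :=
      hSosc (TT j x) i (fun n => TT j (xn n)) htend (fun n => (hmem n).2)
    exact ⟨hj, hi⟩
  · intro x
    obtain ⟨j, hj⟩ := hTne x
    obtain ⟨i, hi⟩ := hSne (TT j x)
    exact ⟨(i, j), hj, hi⟩
  · intro x
    ext z
    simp only [Set.mem_iUnion, hTset, hSset, Set.mem_setOf_eq]
    constructor
    · rintro ⟨y, ⟨j, hj, rfl⟩, i, hi, rfl⟩
      exact ⟨(i, j), ⟨hj, hi⟩, rfl⟩
    · rintro ⟨⟨i, j⟩, ⟨hj, hi⟩, rfl⟩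
      exact ⟨TT j x, ⟨j, hj, rfl⟩, i, hi, rfl⟩

lemma uAvgS_compSV : ∀ {m : ℕ}, 0 < m → ∀ (s : Fin m → ℝ) (T : Fin m → X → Set X),
    (∀ j, UAvgS (s j) (T j)) → UAvgS (∑ j, s j) (compSV T) := by
  intro m
  induction m with
  | zero => intro hm; exact absurd hm (lt_irrefl 0)
  | succ n ih =>
    intro _ s T h
    match n, ih with
    | 0, _ =>
      have he : compSV T = T 0 := by
        funext x
        show (⋃ y ∈ T 0 x, compSV (fun i => T i.succ) y) = T 0 x
        have : ∀ y : X, compSV (fun i : Fin 0 => T i.succ) y = {y} := fun y => rfl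
        simp [this]
      rw [he, Fin.sum_univ_one]
      exact h 0
    | k + 1, ih =>
      have htail : UAvgS (∑ j : Fin (k+1), s j.succ) (compSV (fun i : Fin (k+1) => T i.succ)) :=
        ih (Nat.succ_pos k) (fun j => s j.succ) (fun i => T i.succ) (fun j => h j.succ)
      have hcomp := uAvgS_comp htail (h 0)
      have he : (fun x => ⋃ y ∈ T 0 x, compSV (fun i : Fin (k+1) => T i.succ) y) = compSV T := rfl
      rw [he] at hcomp
      rw [add_comm] at hcomp
      rwa [← Fin.sum_univ_succ] at hcomp

lemma uAvgS_of_unionAveraged {α : ℝ} {T : X → Set X} (h0 : 0 < α) (h1 : α < 1)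
    (h : UnionAveraged α T) : UAvgS (α / (1 - α)) T := by
  obtain ⟨I, instI, Ts, φ, hav, hosc, hne, hset⟩ := h
  refine ⟨I, instI, Ts, φ, ?_, hosc, hne, hset⟩
  intro i
  refine ⟨div_pos h0 (by linarith), ?_⟩
  have hco : (α / (1 - α))⁻¹ = (1 - α) / α := by rw [inv_div]
  rw [hco]
  exact (hav i).2.2

lemma unionAveraged_of_uAvgS {s : ℝ} {T : X → Set X} (h : UAvgS s T) :
    UnionAveraged (s / (s + 1)) T := by
  obtain ⟨I, instI, Ts, φ, hav, hosc, hne, hset⟩ := h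
  obtain ⟨i0, -⟩ := hne 0
  have hs : 0 < s := (hav i0).1
  have hs1 : 0 < s + 1 := by linarith
  refine ⟨I, instI, Ts, φ, ?_, hosc, hne, hset⟩
  intro i
  refine ⟨div_pos hs hs1, (div_lt_one hs1).mpr (by linarith), fun x y => ?_⟩
  have hco : (1 - s / (s + 1)) / (s / (s + 1)) = s⁻¹ := by
    rw [inv_eq_one_div, div_eq_div_iff (ne_of_gt (div_pos hs hs1)) (ne_of_gt hs)]
    have hne1 : s + 1 ≠ 0 := ne_of_gt hs1
    field_simp
    ring
  rw [hco]
  exact (hav i).2 x y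

end Aux2

/-- The composition of union `α_j`-averaged nonexpansive operators is union
`α`-averaged nonexpansive with `α = (1 + (Σ_j α_j/(1−α_j))⁻¹)⁻¹`. -/
theorem stmt_5 {X : Type*}
    [NormedAddCommGroup X] [InnerProductSpace ℝ X] [FiniteDimensional ℝ X]
    {m : ℕ} (hm : 0 < m)
    (α : Fin m → ℝ) (T : Fin m → X → Set X)
    (h : ∀ j, UnionAveraged (α j) (T j)) :
    UnionAveraged (1 + (∑ j, α j / (1 - α j))⁻¹)⁻¹ (compSV T) := by
  have hb : ∀ j, 0 < α j ∧ α j < 1 := by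
    intro j
    obtain ⟨I, instI, Ts, φ, hav, _, hne, _⟩ := h j
    obtain ⟨i, _⟩ := hne 0
    exact ⟨(hav i).1, (hav i).2.1⟩
  have hU : ∀ j, UAvgS (α j / (1 - α j)) (T j) :=
    fun j => uAvgS_of_unionAveraged (hb j).1 (hb j).2 (h j)
  have hcomp := uAvgS_compSV hm (fun j => α j / (1 - α j)) T hU
  have hres := unionAveraged_of_uAvgS hcomp
  have hspos : 0 < ∑ j, α j / (1 - α j) := by
    apply Finset.sum_pos
    · intro j _
      have := hb j
      have h1 : 0 < 1 - α j := by linarith [this.2]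
      exact div_pos this.1 h1
    · exact Finset.univ_nonempty_iff.mpr ⟨⟨0, hm⟩⟩
  have heq : (1 + (∑ j, α j / (1 - α j))⁻¹)⁻¹
      = (∑ j, α j / (1 - α j)) / ((∑ j, α j / (1 - α j)) + 1) := by
    field_simp
  rw [heq]
  exact hres
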